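/- Let x and y be n×n real matrices and let exp denote the matrix exponential. Then exp is differentiable at x and its derivative in direction y is given by the right trivialized tangent formula D exp(x)[y] = dexp_x(y) · exp(x), where dexp_x(y) = Σ_{j=0}^{∞} (1/(j+1)!) ad_x^j(y), ad_x(y) = xy − yx, and the series converges absolutely. -/

import Mathlib

attribute [local instance]
  Matrix.linftyOpNormedAddCommGroup Matrix.linftyOpNormedRing Matrix.linftyOpNormedAlgebra

/-- The adjoint operator `ad_x(y) = xy − yx` on square matrices. -/
def ad {n : ℕ} (x y : Matrix (Fin n) (Fin n) ℝ) : Matrix (Fin n) (Fin n) ℝ :=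
  x * y - y * x

set_option maxHeartbeats 1000000
set_option synthInstance.maxHeartbeats 1000000

open Finset

namespace Stmt18

lemma Tsum' : ∀ (b a : ℕ),
    ∑ s ∈ range (b+1), (-1:ℝ)^s * (b.choose s) / (a+s+1) =
    (a.factorial * b.factorial) / (a+b+1).factorial := by
  intro b
  induction b with
  | zero =>
    intro a
    have h : ((a+1).factorial : ℝ) = (a+1) * a.factorial := by
      rw [Nat.factorial_succ]; push_cast; ring
    have ha : (0:ℝ) < (a:ℝ) + 1 := by positivity
    have ha' : ((a.factorial : ℝ)) ≠ 0 := by positivity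
    simp only [range_one, sum_singleton, pow_zero, Nat.choose_self, Nat.cast_one, one_mul,
      Nat.add_zero, Nat.factorial_one, mul_one, Nat.cast_zero, add_zero, h, zero_add, Nat.factorial_zero]
    field_simp
  | succ b ih =>
    intro a
    have hfact : ∀ s, s ∈ range (b+1) →
        (-1:ℝ)^(s+1) * (((b+1).choose (s+1) : ℕ)) / ((a:ℝ)+((s+1:ℕ):ℝ)+1) =
        (-1:ℝ)^s * (b.choose s) / (((a+1:ℕ):ℝ)+s+1) * (-1)
        + (-1:ℝ)^(s+1) * (b.choose (s+1)) / ((a:ℝ)+((s+1:ℕ):ℝ)+1) := by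
      intro s _
      rw [Nat.choose_succ_succ']
      push_cast
      ring
    rw [Finset.sum_range_succ']
    rw [Finset.sum_congr rfl hfact, Finset.sum_add_distrib, ← Finset.sum_mul]
    have h2 : ∑ s ∈ range (b+1), (-1:ℝ)^(s+1) * (b.choose (s+1)) / ((a:ℝ)+((s+1:ℕ):ℝ)+1)
        = (∑ s ∈ range (b+1), (-1:ℝ)^s * (b.choose s) / (a+s+1))
          - (-1:ℝ)^0 * ((b.choose 0 : ℕ)) / (a+(0:ℕ)+1) := by
      have := Finset.sum_range_succ' (fun s => (-1:ℝ)^s * (b.choose s) / (a+s+1)) (b+1)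
      have h3 := Finset.sum_range_succ (fun s => (-1:ℝ)^s * (b.choose s) / (a+s+1)) (b+1)
      rw [h3] at this
      simp only [Nat.choose_succ_self, Nat.cast_zero, mul_zero, zero_mul, zero_div, add_zero] at this
      push_cast [add_zero] at this ⊢
      linarith [this]
    rw [h2, ih (a+1), ih a]
    have e1 : ((a+1:ℕ)+b+1).factorial = (a+b+2).factorial := by ring_nf
    have e2 : ((a+b+2).factorial : ℝ) = (a+b+2) * (a+b+1).factorial := by
      have : a+b+2 = (a+b+1)+1 := by ring
      rw [this, Nat.factorial_succ]; push_cast; ring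
    have e3 : ((a+1).factorial : ℝ) = (a+1) * a.factorial := by
      rw [Nat.factorial_succ]; push_cast; ring
    have e4 : ((b+1).factorial : ℝ) = (b+1) * b.factorial := by
      rw [Nat.factorial_succ]; push_cast; ring
    have e5 : (a+(b+1)+1).factorial = (a+b+2).factorial := by ring_nf
    rw [e1, e5]
    push_cast [e2, e3, e4]
    have h6 : ((a+b+1).factorial : ℝ) ≠ 0 := by positivity
    have h7 : ((a:ℝ)+b+2) ≠ 0 := by positivity
    have h8 : ((a:ℝ)+1) ≠ 0 := by positivity
    simp only [Nat.choose_zero_right, Nat.cast_one]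
    field_simp
    ring

lemma key_sum' (b a : ℕ) :
    ∑ s ∈ range (b+1), (-1:ℝ)^s / (s.factorial * (b-s).factorial * (a+s+1)) =
    a.factorial / (a+b+1).factorial := by
  have conv : ∀ s ∈ range (b+1),
      (-1:ℝ)^s / (s.factorial * (b-s).factorial * (a+s+1))
      = ((-1:ℝ)^s * (b.choose s) / (a+s+1)) * ((b.factorial : ℝ))⁻¹ := by
    intro s hs
    rw [mem_range, Nat.lt_succ_iff] at hs
    have hC : ((b.choose s : ℕ) : ℝ) * s.factorial * (b-s).factorial = (b.factorial : ℝ) := by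
      exact_mod_cast congrArg (Nat.cast (R := ℝ)) (Nat.choose_mul_factorial_mul_factorial hs)
    have f1 : (s.factorial : ℝ) ≠ 0 := by positivity
    have f2 : ((b-s).factorial : ℝ) ≠ 0 := by positivity
    have f3 : (b.factorial : ℝ) ≠ 0 := by positivity
    have f4 : ((a:ℝ)+s+1) ≠ 0 := by positivity
    have hC' : ((b.choose s : ℕ) : ℝ) = (b.factorial : ℝ) / (s.factorial * (b-s).factorial) := by
      rw [eq_div_iff (by positivity)]
      linear_combination hC
    rw [hC']
    field_simp
  rw [sum_congr rfl conv, ← sum_mul, Tsum' b a]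
  have f3 : (b.factorial : ℝ) ≠ 0 := by positivity
  have f6 : ((a+b+1).factorial : ℝ) ≠ 0 := by positivity
  field_simp

lemma coef_id {m p : ℕ} (hp : p ≤ m) :
    ∑ j ∈ Ico p (m+1), ((((j+1).factorial : ℝ))⁻¹ * (((m-j).factorial : ℝ))⁻¹)
        * ((-1:ℝ)^(j-p) * (j.choose p)) = (((m+1).factorial : ℝ))⁻¹ := by
  rw [Finset.sum_Ico_eq_sum_range]
  have hb : m + 1 - p = (m - p) + 1 := by omega
  rw [hb]
  have conv : ∀ s ∈ range ((m-p)+1),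
      ((((p+s+1).factorial : ℝ))⁻¹ * (((m-(p+s)).factorial : ℝ))⁻¹)
        * ((-1:ℝ)^((p+s)-p) * (((p+s).choose p : ℕ) : ℝ))
      = ((p.factorial : ℝ))⁻¹ * ((-1:ℝ)^s / (s.factorial * ((m-p)-s).factorial * (p+s+1))) := by
    intro s hs
    rw [mem_range, Nat.lt_succ_iff] at hs
    have h1 : p + s - p = s := by omega
    have h2 : m - (p + s) = (m - p) - s := by omega
    have hC : (((p+s).choose p : ℕ) : ℝ) * s.factorial * p.factorial = ((p+s).factorial : ℝ) := by
      exact_mod_cast congrArg (Nat.cast (R := ℝ))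
        (by rw [add_comm p s]; exact Nat.add_choose_mul_factorial_mul_factorial s p)
    have h3 : ((p+s+1).factorial : ℝ) = (p+s+1) * (p+s).factorial := by
      rw [Nat.factorial_succ]; push_cast; ring
    have hC' : (((p+s).choose p : ℕ) : ℝ) = ((p+s).factorial : ℝ) / (s.factorial * p.factorial) := by
      rw [eq_div_iff (by positivity)]
      linear_combination hC
    rw [h1, h2, h3, hC']
    have f1 : ((p+s).factorial : ℝ) ≠ 0 := by positivity
    have f2 : (s.factorial : ℝ) ≠ 0 := by positivity
    have f3 : (p.factorial : ℝ) ≠ 0 := by positivity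
    have f4 : (((m-p)-s).factorial : ℝ) ≠ 0 := by positivity
    have f5 : ((p:ℝ)+s+1) ≠ 0 := by positivity
    field_simp
  rw [sum_congr rfl conv, ← mul_sum, key_sum' (m-p) p]
  have h4 : p + (m-p) + 1 = m+1 := by omega
  rw [h4]
  have f3 : (p.factorial : ℝ) ≠ 0 := by positivity
  have f6 : (((m+1).factorial : ℝ)) ≠ 0 := by positivity
  field_simp

variable {n : ℕ}

local notation "Mat" => Matrix (Fin n) (Fin n) ℝ

noncomputable def Lm (x : Mat) := ContinuousLinearMap.mul ℝ Mat x
noncomputable def Rm (x : Mat) := (ContinuousLinearMap.mul ℝ Mat).flip x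

@[simp] lemma Lm_apply (x z : Mat) : Lm x z = x * z := rfl
@[simp] lemma Rm_apply (x z : Mat) : Rm x z = z * x := rfl

lemma commLR (x : Mat) : Commute (Lm x) (Rm x) := by
  ext z
  simp [ContinuousLinearMap.mul_apply, mul_assoc]

lemma iterate_ad (x y : Mat) (j : ℕ) : (ad x)^[j] y = ((Lm x - Rm x)^j) y := by
  induction j with
  | zero => simp
  | succ j ih =>
    rw [Function.iterate_succ_apply', pow_succ', ContinuousLinearMap.mul_apply, ← ih]
    simp [ad]

lemma Lm_pow (x : Mat) (p : ℕ) : (Lm x)^p = Lm (x^p) := by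
  induction p with
  | zero => ext z; simp
  | succ p ih => rw [pow_succ', ih]; ext z; simp [ContinuousLinearMap.mul_apply, pow_succ', mul_assoc]

lemma Rm_pow (x : Mat) (p : ℕ) : (Rm x)^p = Rm (x^p) := by
  induction p with
  | zero => ext z; simp
  | succ p ih => rw [pow_succ', ih]; ext z; simp [ContinuousLinearMap.mul_apply, pow_succ, mul_assoc]

lemma ad_expand (x y : Mat) (j : ℕ) :
    (ad x)^[j] y = ∑ p ∈ range (j+1), ((-1:ℝ)^(j-p) * (j.choose p)) • (x^p * y * x^(j-p)) := by
  rw [iterate_ad, sub_eq_add_neg, (commLR x).neg_right.add_pow, ContinuousLinearMap.sum_apply]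
  refine sum_congr rfl fun p hp => ?_
  rw [← neg_one_smul ℝ (Rm x), smul_pow, Lm_pow, Rm_pow]
  simp only [ContinuousLinearMap.mul_apply, ContinuousLinearMap.natCast_apply,
    ContinuousLinearMap.smul_apply, Rm_apply, Lm_apply,
    ← Nat.cast_smul_eq_nsmul ℝ, smul_mul_assoc, mul_smul_comm, smul_smul]
  rw [mul_assoc]

lemma finite_id (x y : Mat) (m : ℕ) :
    ∑ j ∈ range (m+1),
        ((((j+1).factorial : ℝ))⁻¹ * (((m-j).factorial : ℝ))⁻¹) • ((ad x)^[j] y * x^(m-j))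
      = (((m+1).factorial : ℝ))⁻¹ • ∑ i ∈ range (m+1), x^i * y * x^(m-i) := by
  have step1 : ∀ j ∈ range (m+1),
      ((((j+1).factorial : ℝ))⁻¹ * (((m-j).factorial : ℝ))⁻¹) • ((ad x)^[j] y * x^(m-j))
      = ∑ p ∈ range (j+1),
          (((((j+1).factorial : ℝ))⁻¹ * (((m-j).factorial : ℝ))⁻¹)
            * ((-1:ℝ)^(j-p) * (j.choose p))) • (x^p * y * x^(m-p)) := by
    intro j hj
    rw [mem_range, Nat.lt_succ_iff] at hj
    rw [ad_expand, sum_mul, smul_sum]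
    refine sum_congr rfl fun p hp => ?_
    rw [mem_range, Nat.lt_succ_iff] at hp
    rw [smul_mul_assoc, smul_smul]
    congr 1
    rw [mul_assoc (x^p * y), ← pow_add]
    congr 2
    omega
  rw [sum_congr rfl step1]
  have swap : ∑ j ∈ range (m+1), ∑ p ∈ range (j+1),
        (((((j+1).factorial : ℝ))⁻¹ * (((m-j).factorial : ℝ))⁻¹)
          * ((-1:ℝ)^(j-p) * (j.choose p))) • (x^p * y * x^(m-p))
      = ∑ p ∈ range (m+1), ∑ j ∈ Ico p (m+1),
        (((((j+1).factorial : ℝ))⁻¹ * (((m-j).factorial : ℝ))⁻¹)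
          * ((-1:ℝ)^(j-p) * (j.choose p))) • (x^p * y * x^(m-p)) := by
    simp only [range_eq_Ico]
    exact (Finset.sum_Ico_Ico_comm 0 (m+1) (fun p j =>
      (((((j+1).factorial : ℝ))⁻¹ * (((m-j).factorial : ℝ))⁻¹)
          * ((-1:ℝ)^(j-p) * (j.choose p))) • (x^p * y * x^(m-p)))).symm
  rw [swap, smul_sum]
  refine sum_congr rfl fun p hp => ?_
  rw [mem_range, Nat.lt_succ_iff] at hp
  rw [← sum_smul, coef_id hp]

lemma norm_left_mul_le (z y : Mat) (i : ℕ) : ‖z^i * y‖ ≤ ‖z‖^i * ‖y‖ := by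
  induction i with
  | zero => simp
  | succ i ih =>
    calc ‖z^(i+1) * y‖ = ‖z * (z^i * y)‖ := by rw [pow_succ', mul_assoc]
    _ ≤ ‖z‖ * ‖z^i * y‖ := norm_mul_le _ _
    _ ≤ ‖z‖ * (‖z‖^i * ‖y‖) := mul_le_mul_of_nonneg_left ih (norm_nonneg z)
    _ = ‖z‖^(i+1) * ‖y‖ := by rw [pow_succ']; ring

lemma norm_triple_le (z y : Mat) (i k : ℕ) : ‖z^i * y * z^k‖ ≤ ‖z‖^i * ‖y‖ * ‖z‖^k := by
  induction k with
  | zero => simpa using norm_left_mul_le z y i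
  | succ k ih =>
    calc ‖z^i * y * z^(k+1)‖ = ‖(z^i * y * z^k) * z‖ := by rw [pow_succ, mul_assoc, mul_assoc, mul_assoc]
    _ ≤ ‖z^i * y * z^k‖ * ‖z‖ := norm_mul_le _ _
    _ ≤ (‖z‖^i * ‖y‖ * ‖z‖^k) * ‖z‖ := mul_le_mul_of_nonneg_right ih (norm_nonneg z)
    _ = ‖z‖^i * ‖y‖ * ‖z‖^(k+1) := by rw [pow_succ]; ring

lemma norm_ad_iter (x y : Mat) (j : ℕ) : ‖(ad x)^[j] y‖ ≤ (2*‖x‖)^j * ‖y‖ := by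
  induction j with
  | zero => simp
  | succ j ih =>
    rw [Function.iterate_succ_apply']
    calc ‖ad x ((ad x)^[j] y)‖ ≤ ‖x * (ad x)^[j] y‖ + ‖(ad x)^[j] y * x‖ := norm_sub_le _ _
    _ ≤ ‖x‖ * ‖(ad x)^[j] y‖ + ‖(ad x)^[j] y‖ * ‖x‖ := by
        gcongr <;> exact norm_mul_le _ _
    _ = 2 * ‖x‖ * ‖(ad x)^[j] y‖ := by ring
    _ ≤ 2 * ‖x‖ * ((2*‖x‖)^j * ‖y‖) := by
        apply mul_le_mul_of_nonneg_left ih (by positivity)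
    _ = (2*‖x‖)^(j+1) * ‖y‖ := by rw [pow_succ]; ring

noncomputable def Q (z : Mat) (m : ℕ) :=
  ∑ i ∈ range (m+1), Lm (z^i) * Rm (z^(m-i))

lemma Q_apply (z : Mat) (m : ℕ) (y : Mat) :
    Q z m y = ∑ i ∈ range (m+1), z^i * y * z^(m-i) := by
  simp [Q, ContinuousLinearMap.sum_apply, ContinuousLinearMap.mul_apply, mul_assoc]

lemma norm_Q_le (z : Mat) (m : ℕ) : ‖Q z m‖ ≤ (m+1) * ‖z‖^m := by
  apply ContinuousLinearMap.opNorm_le_bound _ (by positivity)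
  intro y
  rw [Q_apply]
  calc ‖∑ i ∈ range (m+1), z^i * y * z^(m-i)‖
      ≤ ∑ i ∈ range (m+1), ‖z^i * y * z^(m-i)‖ := norm_sum_le _ _
    _ ≤ ∑ i ∈ range (m+1), ‖z‖^m * ‖y‖ := by
        apply sum_le_sum
        intro i hi
        rw [mem_range, Nat.lt_succ_iff] at hi
        have h := norm_triple_le z y i (m-i)
        have hexp : ‖z‖^i * ‖y‖ * ‖z‖^(m-i) = ‖z‖^m * ‖y‖ := by
          rw [mul_right_comm, ← pow_add]
          congr 2
          omega
        rwa [hexp] at h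
    _ = (m+1) * ‖z‖^m * ‖y‖ := by
        rw [sum_const, card_range, nsmul_eq_mul]
        push_cast
        ring

lemma hasFDerivAt_pow_succ (m : ℕ) (z : Mat) :
    HasFDerivAt (fun w : Mat => w^(m+1)) (Q z m) z := by
  induction m with
  | zero =>
    have : Q z 0 = ContinuousLinearMap.id ℝ Mat := by
      ext y
      simp [Q_apply]
      rfl
    rw [this]
    simp only [zero_add, pow_one]
    exact hasFDerivAt_id z
  | succ m ih =>
    have h := ih.mul' (hasFDerivAt_id z)
    have heq : (fun w : Mat => w^(m+1)) * _root_.id = fun w : Mat => w^(m+1+1) := by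
      funext w
      simp [pow_succ]
    rw [heq] at h
    refine h.congr_fderiv (Eq.symm ?_)
    ext y
    simp only [ContinuousLinearMap.add_apply, ContinuousLinearMap.smul_apply,
      ContinuousLinearMap.smulRight_apply, ContinuousLinearMap.id_apply, id_eq, smul_eq_mul, op_smul_eq_mul]
    have hsum : ∀ i ∈ range (m+1), z^i * y * z^(m+1-i) = (z^i * y * z^(m-i)) * z := by
      intro i hi
      rw [mem_range, Nat.lt_succ_iff] at hi
      rw [mul_assoc (z^i * y), ← pow_succ]
      congr 2
      omega
    rw [Q_apply, Q_apply, Finset.sum_range_succ, Finset.sum_congr rfl hsum, ← Finset.sum_mul,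
      Nat.sub_self, pow_zero, mul_one, add_comm]
    rfl

end Stmt18

open Stmt18

/-- The matrix exponential is (Fréchet) differentiable at any `x`, with derivative given
by the right trivialized tangent formula `D exp(x)[y] = dexp_x(y) · exp(x)`, where
`dexp_x(y) = ∑_{j≥0} ad_x^j(y)/(j+1)!`, the series converging absolutely. -/
theorem stmt_18 {n : ℕ} (x : Matrix (Fin n) (Fin n) ℝ) :
    (∀ y : Matrix (Fin n) (Fin n) ℝ,
      Summable fun j : ℕ => ‖((Nat.factorial (j + 1) : ℝ))⁻¹ • (ad x)^[j] y‖)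
    ∧ ∃ D : Matrix (Fin n) (Fin n) ℝ →L[ℝ] Matrix (Fin n) (Fin n) ℝ,
        HasFDerivAt NormedSpace.exp D x ∧
        ∀ y : Matrix (Fin n) (Fin n) ℝ,
          D y = (∑' j : ℕ, ((Nat.factorial (j + 1) : ℝ))⁻¹ • (ad x)^[j] y)
              * NormedSpace.exp x := by
  classical
  have hbd : ∀ y : Matrix (Fin n) (Fin n) ℝ, ∀ j : ℕ,
      ‖((Nat.factorial (j + 1) : ℝ))⁻¹ • (ad x)^[j] y‖ ≤ (2*‖x‖)^j / j.factorial * ‖y‖ := by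
    intro y j
    rw [norm_smul, Real.norm_eq_abs, abs_of_nonneg (by positivity)]
    have h2 : (((j+1).factorial : ℝ))⁻¹ ≤ ((j.factorial : ℝ))⁻¹ := by
      apply inv_anti₀ (by positivity)
      exact_mod_cast Nat.factorial_le (Nat.le_succ j)
    calc ((Nat.factorial (j+1) : ℝ))⁻¹ * ‖(ad x)^[j] y‖
        ≤ ((j.factorial : ℝ))⁻¹ * ((2*‖x‖)^j * ‖y‖) :=
          mul_le_mul h2 (norm_ad_iter x y j) (norm_nonneg _) (by positivity)
      _ = (2*‖x‖)^j / j.factorial * ‖y‖ := by ring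
  have hsumnorm : ∀ y : Matrix (Fin n) (Fin n) ℝ,
      Summable fun j : ℕ => ‖((Nat.factorial (j + 1) : ℝ))⁻¹ • (ad x)^[j] y‖ := by
    intro y
    exact Summable.of_nonneg_of_le (fun _ => norm_nonneg _) (hbd y)
      ((Real.summable_pow_div_factorial (2*‖x‖)).mul_right ‖y‖)
  refine ⟨hsumnorm, ?_⟩
  set r : ℝ := ‖x‖ + 1 with hr
  have hrpos : 0 < r := by positivity
  have hxball : x ∈ Metric.ball (0 : Matrix (Fin n) (Fin n) ℝ) r := by
    rw [Metric.mem_ball, dist_zero_right, hr]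
    linarith
  have hbQ : ∀ (m : ℕ) (z : Matrix (Fin n) (Fin n) ℝ),
      z ∈ Metric.ball (0 : Matrix (Fin n) (Fin n) ℝ) r →
      ‖(((m+1).factorial : ℝ))⁻¹ • Q z m‖ ≤ r^m / m.factorial := by
    intro m z hz
    rw [Metric.mem_ball, dist_zero_right] at hz
    rw [norm_smul (((m+1).factorial : ℝ))⁻¹ (Q z m), Real.norm_eq_abs,
      abs_of_nonneg (by positivity)]
    have h1 : ‖Q z m‖ ≤ (m+1) * r^m := by
      refine (norm_Q_le z m).trans ?_
      gcongr
    have hfact : (((m+1).factorial : ℝ)) = (m+1) * m.factorial := by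
      rw [Nat.factorial_succ]; push_cast; ring
    have hf0 : (m.factorial : ℝ) ≠ 0 := by positivity
    calc (((m+1).factorial:ℝ))⁻¹ * ‖Q z m‖
        ≤ (((m+1).factorial:ℝ))⁻¹ * ((m+1) * r^m) :=
          mul_le_mul_of_nonneg_left h1 (by positivity)
      _ = r^m / m.factorial := by
          rw [hfact]
          field_simp
  have key := hasFDerivAt_tsum_of_isPreconnected
    (Real.summable_pow_div_factorial r)
    Metric.isOpen_ball
    ((convex_ball (0 : Matrix (Fin n) (Fin n) ℝ) r).isPreconnected)
    (f := fun m (z : Matrix (Fin n) (Fin n) ℝ) => (((m+1).factorial : ℝ))⁻¹ • z^(m+1))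
    (f' := fun m z => (((m+1).factorial : ℝ))⁻¹ • Q z m)
    (fun m z _ => (hasFDerivAt_pow_succ m z).const_smul (((m+1).factorial : ℝ))⁻¹)
    hbQ
    (Metric.mem_ball_self hrpos)
    (by
      have h0 : (fun m : ℕ => (((m+1).factorial : ℝ))⁻¹ • (0 : Matrix (Fin n) (Fin n) ℝ)^(m+1))
          = fun _ => 0 := by
        funext m
        simp [zero_pow]
      rw [h0]
      exact summable_zero)
    hxball
  have hexp' : NormedSpace.exp = fun z : Matrix (Fin n) (Fin n) ℝ =>
      1 + ∑' m : ℕ, (((m+1).factorial : ℝ))⁻¹ • z^(m+1) := by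
    funext z
    have h0 := congrFun (NormedSpace.exp_eq_tsum (𝕂 := ℝ) (𝔸 := Matrix (Fin n) (Fin n) ℝ)) z
    rw [h0]; erw [Summable.tsum_eq_zero_add (NormedSpace.expSeries_summable' (𝕂 := ℝ) z)]
    norm_num
    rfl
  refine ⟨∑' m : ℕ, (((m+1).factorial : ℝ))⁻¹ • Q x m, ?_, ?_⟩
  · rw [hexp']
    exact key.const_add 1
  · intro y
    have hDsum : Summable fun m : ℕ => (((m+1).factorial : ℝ))⁻¹ • Q x m :=
      Summable.of_norm_bounded (Real.summable_pow_div_factorial r)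
        (fun m => hbQ m x hxball)
    have happ := (ContinuousLinearMap.apply ℝ (Matrix (Fin n) (Fin n) ℝ) y).map_tsum hDsum
    simp only [ContinuousLinearMap.apply_apply] at happ
    erw [happ]
    rw [show NormedSpace.exp x = ∑' k : ℕ, ((k.factorial : ℝ))⁻¹ • x^k from
      congrFun (NormedSpace.exp_eq_tsum (𝕂 := ℝ)) x]
    erw [tsum_mul_tsum_eq_tsum_sum_range_of_summable_norm (hsumnorm y)
      (NormedSpace.norm_expSeries_summable' (𝕂 := ℝ) x)]
    apply tsum_congr
    intro m
    rw [ContinuousLinearMap.smul_apply, Q_apply, ← finite_id]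
    apply Finset.sum_congr rfl
    intro j hj
    rw [smul_mul_assoc, mul_smul_comm, smul_smul]
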